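/- Let P be a set of n points in ℝ^d, let k ≥ 1 divide n, and let (c_i, r_i, P_i), i = 1, …, n/k, be a 2-approximate quorum clustering of P with parameter k. For a query point q ∈ ℝ^d write q̂ = (q, 0) ∈ ℝ^{d+1} and b̂_i = (c_i, r_i) ∈ ℝ^{d+1}. If an index j satisfies ‖q̂ − b̂_j‖ ≤ 2 · min_{i = 1, …, n/k} ‖q̂ − b̂_i‖ (Euclidean norm in ℝ^{d+1}; i.e., b̂_j is a 2-approximate nearest neighbor of q̂ among the lifted balls), then the value v = ‖q − c_j‖ + r_j satisfies v/(10√2) ≤ d_k(P,q) ≤ v; in particular v is a 15-approximation of d_k(P,q). -/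

import Mathlib

open Metric

/-- The `k`-th nearest neighbor distance of `q` to the finite point set `P`. -/
noncomputable def kthNNDist {d : ℕ} (k : ℕ) (P : Finset (EuclideanSpace ℝ (Fin d)))
    (q : EuclideanSpace ℝ (Fin d)) : ℝ :=
  sInf {r : ℝ | 0 ≤ r ∧ k ≤ (P.filter fun p => dist q p ≤ r).card}

/-- `rad_k Q`: the radius of the smallest closed ball containing at least `k` points of `Q`. -/
noncomputable def radk {d : ℕ} (k : ℕ) (Q : Finset (EuclideanSpace ℝ (Fin d))) : ℝ :=
  sInf (Set.range fun q => kthNNDist k Q q)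

/-- Lift a point `p ∈ ℝ^d` together with a real `t` to the point `(p, t) ∈ ℝ^{d+1}`. -/
noncomputable def liftPt {d : ℕ} (p : EuclideanSpace ℝ (Fin d)) (t : ℝ) :
    EuclideanSpace ℝ (Fin (d + 1)) :=
  WithLp.toLp 2 (Fin.snoc (α := fun _ => ℝ) (WithLp.ofLp p) t)

lemma kthNNDist_nonneg {d k : ℕ} (P : Finset (EuclideanSpace ℝ (Fin d)))
    (q : EuclideanSpace ℝ (Fin d)) : 0 ≤ kthNNDist k P q := by
  unfold kthNNDist
  rcases Set.eq_empty_or_nonempty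
    {r : ℝ | 0 ≤ r ∧ k ≤ (P.filter fun p => dist q p ≤ r).card} with h | h
  · rw [h]; simp [Real.sInf_empty]
  · exact le_csInf h fun r hr => hr.1

lemma kthNNDist_le {d k : ℕ} {P : Finset (EuclideanSpace ℝ (Fin d))}
    {q : EuclideanSpace ℝ (Fin d)} {r : ℝ} (h0 : 0 ≤ r)
    (hc : k ≤ (P.filter fun p => dist q p ≤ r).card) : kthNNDist k P q ≤ r :=
  csInf_le ⟨0, fun _ hx => hx.1⟩ ⟨h0, hc⟩

lemma kthNNDist_spec {d k : ℕ} (hk : 1 ≤ k) {P : Finset (EuclideanSpace ℝ (Fin d))}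
    (hkP : k ≤ P.card) (q : EuclideanSpace ℝ (Fin d)) :
    k ≤ (P.filter fun p => dist q p ≤ kthNNDist k P q).card := by
  classical
  have hPne : P.Nonempty := Finset.card_pos.mp (lt_of_lt_of_le hk hkP)
  set S := {r : ℝ | 0 ≤ r ∧ k ≤ (P.filter fun p => dist q p ≤ r).card} with hS
  have h2 : {r : ℝ | k ≤ (P.filter fun p => dist q p ≤ r).card} =
      ⋃ T ∈ P.powersetCard k, ⋂ p ∈ T, Set.Ici (dist q p) := by
    ext r
    simp only [Set.mem_setOf_eq, Set.mem_iUnion, Set.mem_iInter, Set.mem_Ici,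
      Finset.mem_powersetCard]
    constructor
    · intro h
      obtain ⟨T, hT, hTc⟩ := Finset.exists_subset_card_eq h
      exact ⟨T, ⟨hT.trans (Finset.filter_subset _ _), hTc⟩,
        fun p hp => (Finset.mem_filter.mp (hT hp)).2⟩
    · rintro ⟨T, ⟨hTP, hTc⟩, hd⟩
      calc k = T.card := hTc.symm
        _ ≤ _ := Finset.card_le_card fun p hp =>
            Finset.mem_filter.mpr ⟨hTP hp, hd p hp⟩
  have hclosed : IsClosed S := by
    have hSi : S = Set.Ici 0 ∩ {r : ℝ | k ≤ (P.filter fun p => dist q p ≤ r).card} := by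
      ext r; simp [hS, Set.mem_Ici]
    rw [hSi, h2]
    exact isClosed_Ici.inter (isClosed_biUnion_finset fun T _ =>
      isClosed_biInter fun p _ => isClosed_Ici)
  have hne : S.Nonempty := by
    obtain ⟨p1, hp1⟩ := id hPne
    refine ⟨P.sup' hPne fun p => dist q p,
      le_trans dist_nonneg (Finset.le_sup' (fun p => dist q p) hp1), ?_⟩
    calc k ≤ P.card := hkP
      _ ≤ _ := Finset.card_le_card fun p hp =>
        Finset.mem_filter.mpr ⟨hp, Finset.le_sup' (fun p => dist q p) hp⟩
  have hbdd : BddBelow S := ⟨0, fun _ hx => hx.1⟩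
  have hmem := hclosed.csInf_mem hne hbdd
  exact hmem.2

lemma radk_nonneg {d k : ℕ} (Q : Finset (EuclideanSpace ℝ (Fin d))) : 0 ≤ radk k Q :=
  le_csInf (Set.range_nonempty _) (by rintro b ⟨x, rfl⟩; exact kthNNDist_nonneg Q x)

lemma radk_le {d k : ℕ} (Q : Finset (EuclideanSpace ℝ (Fin d)))
    (q : EuclideanSpace ℝ (Fin d)) : radk k Q ≤ kthNNDist k Q q :=
  csInf_le ⟨0, by rintro b ⟨x, rfl⟩; exact kthNNDist_nonneg Q x⟩ ⟨q, rfl⟩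

lemma liftPt_dist_sq {d : ℕ} (p p' : EuclideanSpace ℝ (Fin d)) (s s' : ℝ) :
    dist (liftPt p s) (liftPt p' s') ^ 2 = dist p p' ^ 2 + (s - s') ^ 2 := by
  rw [EuclideanSpace.dist_eq, EuclideanSpace.dist_eq,
    Real.sq_sqrt (by positivity), Real.sq_sqrt (by positivity),
    Fin.sum_univ_castSucc]
  simp [liftPt, Real.dist_eq, sq_abs]

lemma dist_lift_le {d : ℕ} (q c : EuclideanSpace ℝ (Fin d)) {r : ℝ} (hr : 0 ≤ r) :
    dist (liftPt q 0) (liftPt c r) ≤ dist q c + r := by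
  have h := liftPt_dist_sq q c 0 r
  have hD : (0:ℝ) ≤ dist (liftPt q 0) (liftPt c r) := dist_nonneg
  have ha : (0:ℝ) ≤ dist q c := dist_nonneg
  nlinarith [h, hD, ha, hr]

lemma add_le_sqrt_two_mul_dist {d : ℕ} (q c : EuclideanSpace ℝ (Fin d)) {r : ℝ} (hr : 0 ≤ r) :
    dist q c + r ≤ Real.sqrt 2 * dist (liftPt q 0) (liftPt c r) := by
  have h := liftPt_dist_sq q c 0 r
  have hD : (0:ℝ) ≤ dist (liftPt q 0) (liftPt c r) := dist_nonneg
  have ha : (0:ℝ) ≤ dist q c := dist_nonneg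
  have hs : Real.sqrt 2 ^ 2 = 2 := Real.sq_sqrt (by norm_num)
  have hs0 : (0:ℝ) ≤ Real.sqrt 2 := Real.sqrt_nonneg 2
  set D := dist (liftPt q 0) (liftPt c r) with hDdef
  have hsq : Real.sqrt 2 * D = Real.sqrt (2 * D ^ 2) := by
    rw [Real.sqrt_mul (by norm_num), Real.sqrt_sq hD]
  rw [hsq, show (2 : ℝ) * D ^ 2 = 2 * dist q c ^ 2 + 2 * r ^ 2 by nlinarith [h]]
  rw [show dist q c + r = Real.sqrt ((dist q c + r) ^ 2) by
    rw [Real.sqrt_sq (by linarith)]]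
  apply Real.sqrt_le_sqrt
  nlinarith [sq_nonneg (dist q c - r)]

open Classical in
/-- If `b̂_j = (c_j, r_j)` is a 2-approximate Euclidean nearest neighbor of `q̂ = (q, 0)`
among the lifted balls of a 2-approximate quorum clustering, then `v = ‖q - c_j‖ + r_j`
satisfies `v / (10√2) ≤ d_k(P, q) ≤ v`; in particular, `v` is a `15`-approximation. -/
theorem lifted_ann_gives_const_approx {d n k : ℕ} (hk : 1 ≤ k) (hdvd : k ∣ n)
    (hn : 0 < n) (P : Finset (EuclideanSpace ℝ (Fin d))) (hP : P.card = n)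
    (c : Fin (n / k) → EuclideanSpace ℝ (Fin d)) (r : Fin (n / k) → ℝ)
    (Q : Fin (n / k) → Finset (EuclideanSpace ℝ (Fin d)))
    (hdisj : ∀ i j, i ≠ j → Disjoint (Q i) (Q j))
    (hunion : Finset.univ.biUnion Q = P)
    (hcard : ∀ i, (Q i).card = k)
    (hcover : ∀ i, ↑(Q i) ⊆ closedBall (c i) (r i))
    (happrox : ∀ i,
      r i / 2 ≤ radk k (P \ (Finset.univ.filter fun j => j < i).biUnion Q) ∧
      radk k (P \ (Finset.univ.filter fun j => j < i).biUnion Q) ≤ r i)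
    (q : EuclideanSpace ℝ (Fin d)) (j : Fin (n / k))
    (hj : dist (liftPt q 0) (liftPt (c j) (r j)) ≤
      2 * ⨅ i, dist (liftPt q 0) (liftPt (c i) (r i))) :
    (dist q (c j) + r j) / (10 * Real.sqrt 2) ≤ kthNNDist k P q ∧
      kthNNDist k P q ≤ dist q (c j) + r j := by
  classical
  have hkn : k ≤ n := Nat.le_of_dvd hn hdvd
  have hr0 : ∀ i, 0 ≤ r i := fun i =>
    le_trans (radk_nonneg _) (happrox i).2
  have hQP : ∀ i, Q i ⊆ P := fun i => by
    rw [← hunion]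
    exact fun p hp => Finset.mem_biUnion.mpr ⟨i, Finset.mem_univ i, hp⟩
  set ρ := kthNNDist k P q with hρdef
  have hρ0 : 0 ≤ ρ := kthNNDist_nonneg P q
  -- upper bound
  have hup : ρ ≤ dist q (c j) + r j := by
    apply kthNNDist_le (add_nonneg dist_nonneg (hr0 j))
    calc k = (Q j).card := (hcard j).symm
      _ ≤ _ := Finset.card_le_card fun p hp => by
          have hpc : dist p (c j) ≤ r j := mem_closedBall.mp (hcover j hp)
          exact Finset.mem_filter.mpr ⟨hQP j hp,
            (dist_triangle q (c j) p).trans (by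
              rw [dist_comm (c j) p] at *; linarith)⟩
  refine ⟨?_, hup⟩
  -- lower bound
  have hmemS : k ≤ (P.filter fun p => dist q p ≤ ρ).card :=
    kthNNDist_spec hk (hP ▸ hkn) q
  set F := P.filter fun p => dist q p ≤ ρ with hFdef
  have hFne : F.Nonempty := Finset.card_pos.mp (lt_of_lt_of_le hk hmemS)
  obtain ⟨p0, hp0⟩ := id hFne
  have hp0P : p0 ∈ P := (Finset.mem_filter.mp hp0).1
  obtain ⟨i0, _, hi0⟩ := Finset.mem_biUnion.mp (hunion ▸ hp0P)
  set I := Finset.univ.filter fun i => ((Q i) ∩ F).Nonempty with hIdef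
  have hIne : I.Nonempty :=
    ⟨i0, Finset.mem_filter.mpr ⟨Finset.mem_univ _, ⟨p0, Finset.mem_inter.mpr ⟨hi0, hp0⟩⟩⟩⟩
  set i := I.min' hIne with hidef
  have hiI : i ∈ I := I.min'_mem hIne
  obtain ⟨p1, hp1⟩ := (Finset.mem_filter.mp hiI).2
  have hp1Q : p1 ∈ Q i := (Finset.mem_inter.mp hp1).1
  have hp1F : p1 ∈ F := (Finset.mem_inter.mp hp1).2
  set Si := P \ (Finset.univ.filter fun m => m < i).biUnion Q with hSidef
  have hFSi : F ⊆ Si := by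
    intro p hp
    rw [hSidef, Finset.mem_sdiff]
    refine ⟨(Finset.mem_filter.mp hp).1, fun hmem => ?_⟩
    obtain ⟨m, hm, hpm⟩ := Finset.mem_biUnion.mp hmem
    have hmlt : m < i := (Finset.mem_filter.mp hm).2
    have hmI : m ∈ I := Finset.mem_filter.mpr
      ⟨Finset.mem_univ _, ⟨p, Finset.mem_inter.mpr ⟨hpm, hp⟩⟩⟩
    exact absurd (I.min'_le m hmI) (not_le.mpr hmlt)
  have hradle : radk k Si ≤ ρ := by
    refine le_trans (radk_le Si q) (kthNNDist_le hρ0 ?_)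
    calc k ≤ F.card := hmemS
      _ ≤ _ := Finset.card_le_card fun p hp =>
        Finset.mem_filter.mpr ⟨hFSi hp, (Finset.mem_filter.mp hp).2⟩
  have hri : r i ≤ 2 * ρ := by
    have := (happrox i).1
    rw [← hSidef] at this
    linarith
  have hqc : dist q (c i) ≤ ρ + r i := by
    have h1 : dist q p1 ≤ ρ := (Finset.mem_filter.mp hp1F).2
    have h2 : dist p1 (c i) ≤ r i := mem_closedBall.mp (hcover i hp1Q)
    calc dist q (c i) ≤ dist q p1 + dist p1 (c i) := dist_triangle _ _ _
      _ ≤ ρ + r i := add_le_add h1 h2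
  have hDi : dist (liftPt q 0) (liftPt (c i) (r i)) ≤ 5 * ρ := by
    calc dist (liftPt q 0) (liftPt (c i) (r i)) ≤ dist q (c i) + r i :=
        dist_lift_le q (c i) (hr0 i)
      _ ≤ 5 * ρ := by linarith
  have hbddD : BddBelow (Set.range fun i => dist (liftPt q 0) (liftPt (c i) (r i))) :=
    ⟨0, by rintro b ⟨m, rfl⟩; exact dist_nonneg⟩
  have hinf : (⨅ m, dist (liftPt q 0) (liftPt (c m) (r m))) ≤
      dist (liftPt q 0) (liftPt (c i) (r i)) := ciInf_le hbddD i
  have hDj : dist (liftPt q 0) (liftPt (c j) (r j)) ≤ 10 * ρ := by linarith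
  have hv : dist q (c j) + r j ≤ Real.sqrt 2 * (10 * ρ) := by
    calc dist q (c j) + r j ≤ Real.sqrt 2 * dist (liftPt q 0) (liftPt (c j) (r j)) :=
        add_le_sqrt_two_mul_dist q (c j) (hr0 j)
      _ ≤ Real.sqrt 2 * (10 * ρ) :=
        mul_le_mul_of_nonneg_left hDj (Real.sqrt_nonneg 2)
  have hs2 : (0:ℝ) < Real.sqrt 2 := Real.sqrt_pos.mpr (by norm_num)
  rw [div_le_iff₀ (by positivity)]
  nlinarith [hv, hs2]
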